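/- An arrangement A is k-formal if and only if H_i(D_•) = 0 for every i = 1, …, k−1, where D_• is the complex with D_0 = V*, D_1 = E(A), d_1 = φ, and d_k = π_k : D_k(A) → D_{k-1}(A) for k ≥ 2. -/

import Mathlib

open Module LinearMap Submodule

variable {K V ι : Type*} [Field K] [AddCommGroup V] [Module K V] [Fintype ι]

/-- The linear map `E(A) = ⊕_{H ∈ A} K·e_H → V*` sending `e_H` to the defining form `α_H`. -/
noncomputable def phiA (α : ι → Module.Dual K V) : (ι → K) →ₗ[K] Module.Dual K V :=
  Fintype.linearCombination K α

/-- The intersection lattice `L(A)`: all intersections of subfamilies of the arrangement. -/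
def arrL (α : ι → Module.Dual K V) : Set (Submodule K V) :=
  Set.range fun S : Finset ι => ⨅ i ∈ S, LinearMap.ker (α i)

/-- The rank of `X ∈ L(A)`: its codimension in `V`. -/
noncomputable def rkA (K : Type*) {V : Type*} [Field K] [AddCommGroup V] [Module K V]
    (X : Submodule K V) : ℕ :=
  Module.finrank K V - Module.finrank K ↥X

/-- The flat determined by a subset `S` of the arrangement. -/
def flatA (α : ι → Module.Dual K V) (S : Finset ι) : Submodule K V :=
  ⨅ i ∈ S, LinearMap.ker (α i)

/-- `S` is closed: it contains every hyperplane containing its flat.  Closed subsets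
are in bijection with the elements of the intersection lattice `L(A)`, via `S = A_X`. -/
def IsFlatA (α : ι → Module.Dual K V) (S : Finset ι) : Prop :=
  ∀ i, flatA α S ≤ LinearMap.ker (α i) → i ∈ S

/-- Index type for the elements `X ∈ L(A)` with `r(X) = k`, encoded as the closed
subsets `A_X ⊆ A` whose flat has rank `k`. -/
def IdxA (α : ι → Module.Dual K V) (k : ℕ) :=
  {S : Finset ι // IsFlatA α S ∧ rkA K (flatA α S) = k}

instance (α : ι → Module.Dual K V) (k : ℕ) : Finite (IdxA α k) := Subtype.finite

noncomputable instance (α : ι → Module.Dual K V) (k : ℕ) : Fintype (IdxA α k) :=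
  Fintype.ofFinite _

/-- Ambient spaces: `AmbA α m` contains `D_{m+1}(A_X)` and `R_{m+2}(A_X)` for every `X`.
`AmbA α 0 = E(A) = ι → K`, and `AmbA α (m+1) = ⊕_{X ∈ L, r(X) = m+2} (AmbA α m)`. -/
def AmbA (α : ι → Module.Dual K V) : ℕ → Type _
  | 0 => ι → K
  | (m+1) => IdxA α (m+2) → AmbA α m

instance ambACG (α : ι → Module.Dual K V) : ∀ m, AddCommGroup (AmbA α m)
  | 0 => inferInstanceAs (AddCommGroup (ι → K))
  | (m+1) =>
    letI := ambACG α m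
    inferInstanceAs (AddCommGroup (IdxA α (m+2) → AmbA α m))

instance ambMod (α : ι → Module.Dual K V) : ∀ m, Module K (AmbA α m)
  | 0 => inferInstanceAs (Module K (ι → K))
  | (m+1) =>
    letI := ambACG α m
    letI := ambMod α m
    inferInstanceAs (Module K (IdxA α (m+2) → AmbA α m))

/-- The differential `d_{m+2} = π_{m+2} : D_{m+2} → D_{m+1}` (as a map of ambient spaces):
the sum of the coordinate inclusions. -/
noncomputable def dA (α : ι → Module.Dual K V) (m : ℕ) : AmbA α (m+1) →ₗ[K] AmbA α m :=
  ∑ Y : IdxA α (m+2), LinearMap.proj Y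

/-- `RelA α m X` is the relation space `R_{m+2}(A_X) `, realized inside the ambient
space `AmbA α m`.  `RelA α 0 X = F(A_X)` consists of the relations supported on `A_X`;
and `RelA α (m+1) X = R_{m+3}(A_X)` is the kernel of `π_{m+2} : D_{m+2}(A_X) → R_{m+2}(A_X)`,
where `D_{m+2}(A_X) = ⊕_{Y ∈ L(A_X), r(Y)=m+2} R_{m+2}(A_Y)`. -/
noncomputable def RelA (α : ι → Module.Dual K V) : (m : ℕ) → Submodule K V → Submodule K (AmbA α m)
  | 0, X =>
      LinearMap.ker (phiA α) ⊓
        ⨅ (i : ι) (_ : ¬ X ≤ LinearMap.ker (α i)), LinearMap.ker (LinearMap.proj (R := K) i)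
  | (m+1), X =>
      (⨅ Y : IdxA α (m+2), Submodule.comap (LinearMap.proj Y) (RelA α m (flatA α Y.1))) ⊓
      (⨅ (Y : IdxA α (m+2)) (_ : ¬ X ≤ flatA α Y.1), LinearMap.ker (LinearMap.proj (R := K) Y)) ⊓
      LinearMap.ker (dA α m)

/-- `DA α m X` is the space `D_{m+2}(A_X) = ⊕_{Y ∈ L(A_X), r(Y)=m+2} R_{m+2}(A_Y)`,
realized inside the ambient space `AmbA α (m+1)`. -/
noncomputable def DA (α : ι → Module.Dual K V) (m : ℕ) (X : Submodule K V) :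
    Submodule K (AmbA α (m+1)) :=
  (⨅ Y : IdxA α (m+2), Submodule.comap (LinearMap.proj Y) (RelA α m (flatA α Y.1))) ⊓
  (⨅ (Y : IdxA α (m+2)) (_ : ¬ X ≤ flatA α Y.1), LinearMap.ker (LinearMap.proj (R := K) Y))
/-- `F_2(A)`: the subspace of the relation space `F(A)` spanned by the relations
supported on exactly three hyperplanes. -/
noncomputable def F2A (α : ι → Module.Dual K V) : Submodule K (ι → K) :=
  Submodule.span K {c | c ∈ LinearMap.ker (phiA α) ∧ {i | c i ≠ 0}.ncard = 3}

/-- `k`-formality of the arrangement.  `A` is `2`-formal (formal) iff `F(A) = F_2(A)`;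
for `k ≥ 3`, `A` is `k`-formal iff it is `(k-1)`-formal and
`π_k : D_k(A) → R_k(A)` is surjective. -/
def kFormalA (α : ι → Module.Dual K V) : ℕ → Prop
  | 0 => True
  | 1 => True
  | 2 => LinearMap.ker (phiA α) = F2A α
  | (k+3) => kFormalA α (k+2) ∧ RelA α (k+1) ⊥ ≤ Submodule.map (dA α (k+1)) (DA α (k+1) ⊥)

/-- Vanishing of the homology `H_i(D_•) = ker d_i / im d_{i+1}` of the complex
`D_• : ⋯ → D_2 → D_1 = E(A) → D_0 = V* → 0`. -/
def HzeroA (α : ι → Module.Dual K V) : ℕ → Prop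
  | 0 => True
  | 1 => LinearMap.ker (phiA α) ≤ Submodule.map (dA α 0) (DA α 0 ⊥)
  | (m+2) => DA α m ⊥ ⊓ LinearMap.ker (dA α m) ≤ Submodule.map (dA α (m+1)) (DA α (m+1) ⊥)
set_option linter.unusedSectionVars false

section Helpers

variable {K V ι : Type*} [Field K] [AddCommGroup V] [Module K V] [Fintype ι]

lemma phiA_apply (α : ι → Module.Dual K V) (c : ι → K) :
    phiA α c = ∑ t, c t • α t := by
  simp [phiA, Fintype.linearCombination_apply]

lemma phiA_eq_sum {α : ι → Module.Dual K V} {c : ι → K} {T : Finset ι}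
    (h : ∀ t, t ∉ T → c t = 0) : phiA α c = ∑ t ∈ T, c t • α t := by
  rw [phiA_apply]
  exact (Finset.sum_subset T.subset_univ fun t _ ht => by rw [h t ht, zero_smul]).symm

lemma phiA_single [DecidableEq ι] (α : ι → Module.Dual K V) (i : ι) (a : K) :
    phiA α (Pi.single i a) = a • α i := by
  rw [phiA_apply]
  simp [Pi.single_apply, ite_smul]

lemma indepA {α : ι → Module.Dual K V} (hne : ∀ i, α i ≠ 0)
    (hinj : Function.Injective fun i => LinearMap.ker (α i)) {i j : ι} (hij : i ≠ j) :
    LinearIndependent K ![α i, α j] := by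
  rw [LinearIndependent.pair_iff' (hne i)]
  intro a ha
  have ha0 : a ≠ 0 := by
    rintro rfl
    exact hne j (by simpa using ha.symm)
  apply hij
  apply hinj
  show LinearMap.ker (α i) = LinearMap.ker (α j)
  rw [← ha, LinearMap.ker_smul _ a ha0]

lemma smul_neA {α : ι → Module.Dual K V} (hne : ∀ i, α i ≠ 0)
    (hinj : Function.Injective fun i => LinearMap.ker (α i)) {i j : ι} (hij : i ≠ j)
    (a : K) : a • α i ≠ α j :=
  (LinearIndependent.pair_iff' (hne i)).mp (indepA hne hinj hij) a

lemma frk_span_pair {x y : Module.Dual K V} (h : LinearIndependent K ![x, y]) :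
    Module.finrank K (Submodule.span K ({x, y} : Set (Module.Dual K V))) = 2 := by
  have hr : Set.range ![x, y] = {x, y} := by
    ext z
    simp [Matrix.range_cons, Matrix.range_empty]
    tauto
  have := finrank_span_eq_card h
  rw [hr] at this
  simpa using this

lemma rkA_dualAnnihilator [FiniteDimensional K V] (X : Submodule K V) :
    Module.finrank K X.dualAnnihilator = rkA K X := by
  have h1 : Module.finrank K (V ⧸ X) = Module.finrank K X.dualAnnihilator :=
    (Subspace.quotEquivAnnihilator X).finrank_eq
  have h2 := Submodule.finrank_quotient_add_finrank X
  have h3 := X.finrank_le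
  rw [rkA]
  omega

lemma rkA_dualCoannihilator [FiniteDimensional K V] (W : Subspace K (Module.Dual K V)) :
    rkA K W.dualCoannihilator = Module.finrank K W := by
  have h := Subspace.finrank_add_finrank_dualCoannihilator_eq W
  have h3 := W.dualCoannihilator.finrank_le
  rw [rkA]
  omega

lemma mem_RelA0 (α : ι → Module.Dual K V) (X : Submodule K V) (c : ι → K) :
    c ∈ RelA α 0 X ↔ phiA α c = 0 ∧ ∀ t, ¬ X ≤ LinearMap.ker (α t) → c t = 0 := by
  change c ∈ (LinearMap.ker (phiA α) ⊓ ⨅ (i : ι) (_ : ¬ X ≤ LinearMap.ker (α i)),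
    LinearMap.ker (LinearMap.proj (R := K) (φ := fun _ : ι => K) i) : Submodule K (ι → K)) ↔ _
  simp [Submodule.mem_inf, Submodule.mem_iInf, LinearMap.mem_ker]

lemma dA_apply (α : ι → Module.Dual K V) (m : ℕ) (x : AmbA α (m+1)) :
    dA α m x = ∑ Y : IdxA α (m+2), x Y := by
  exact (LinearMap.sum_apply Finset.univ
    (fun Y : IdxA α (m+2) => (LinearMap.proj Y : (IdxA α (m+2) → AmbA α m) →ₗ[K] AmbA α m))
    (show IdxA α (m+2) → AmbA α m from x)).trans (Finset.sum_congr rfl fun d _ => rfl)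

lemma dA_single (α : ι → Module.Dual K V) (m : ℕ) [DecidableEq (IdxA α (m+2))]
    (Y : IdxA α (m+2)) (c : AmbA α m) : dA α m (Pi.single Y c) = c := by
  refine (dA_apply α m _).trans ?_
  simp [Pi.single_apply]

lemma mem_DA_bot (α : ι → Module.Dual K V) (m : ℕ) (x : AmbA α (m+1)) :
    x ∈ DA α m ⊥ ↔ ∀ Y : IdxA α (m+2), x Y ∈ RelA α m (flatA α Y.1) := by
  rw [DA]
  simp only [Submodule.mem_inf, Submodule.mem_iInf, Submodule.mem_comap, LinearMap.mem_ker,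
    bot_le, not_true_eq_false, IsEmpty.forall_iff, implies_true, and_true]
  exact Iff.rfl

lemma relA_bot (α : ι → Module.Dual K V) (m : ℕ) :
    RelA α (m+1) ⊥ = DA α m ⊥ ⊓ LinearMap.ker (dA α m) := by
  rw [RelA, DA]

end Helpers
section Key

variable {K V ι : Type*} [Field K] [AddCommGroup V] [Module K V] [Fintype ι]

lemma relA0_le_F2A [FiniteDimensional K V] {α : ι → Module.Dual K V}
    (hne : ∀ i, α i ≠ 0) (hinj : Function.Injective fun i => LinearMap.ker (α i))
    {X : Submodule K V} (hX : rkA K X = 2) :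
    RelA α 0 X ≤ F2A α := by
  classical
  have hW : Module.finrank K X.dualAnnihilator = 2 := by
    rw [rkA_dualAnnihilator]; exact hX
  suffices H : ∀ n (c : ι → K), phiA α c = 0 →
      (∀ t, c t ≠ 0 → X ≤ LinearMap.ker (α t)) →
      (Finset.univ.filter fun t => c t ≠ 0).card ≤ n → c ∈ F2A α by
    intro c hc
    replace hc := (mem_RelA0 α X c).mp hc
    refine H _ c hc.1 (fun t ht => ?_) le_rfl
    by_contra h
    exact ht (hc.2 t h)
  intro n
  induction n with
  | zero =>
    intro c h1 h2 h3
    have hc : c = 0 := by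
      funext t
      show c t = 0
      by_contra ht
      have hm : t ∈ Finset.univ.filter fun t => c t ≠ 0 := by simp [ht]
      have := Finset.card_pos.mpr ⟨t, hm⟩
      omega
    rw [hc]
    exact zero_mem _
  | succ n IH =>
    intro c h1 h2 h3
    set s := Finset.univ.filter fun t => c t ≠ 0 with hs
    have hmem : ∀ t, t ∈ s ↔ c t ≠ 0 := fun t => by simp [hs]
    have hsupp : ∀ t, t ∉ s → c t = 0 := fun t ht => by
      by_contra h; exact ht ((hmem t).mpr h)
    by_cases h0 : s.card = 0
    · exact IH c h1 h2 (by rw [← hs]; omega)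
    by_cases hc1 : s.card = 1
    · obtain ⟨i, hi⟩ := Finset.card_eq_one.mp hc1
      have hphi : c i • α i = 0 := by
        have := h1
        rw [phiA_eq_sum (T := s) hsupp, hi, Finset.sum_singleton] at this
        exact this
      have hci : c i ≠ 0 := (hmem i).mp (hi ▸ Finset.mem_singleton_self i)
      rcases smul_eq_zero.mp hphi with h | h
      · exact absurd h hci
      · exact absurd h (hne i)
    by_cases hc2 : s.card = 2
    · obtain ⟨i, j, hij, hij2⟩ := Finset.card_eq_two.mp hc2
      have hphi : c i • α i + c j • α j = 0 := by
        have := h1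
        rw [phiA_eq_sum (T := s) hsupp, hij2, Finset.sum_pair hij] at this
        exact this
      have hci : c i ≠ 0 := (hmem i).mp (by rw [hij2]; simp)
      exact absurd ((LinearIndependent.pair_iff.mp (indepA hne hinj hij)) _ _ hphi).1 hci
    by_cases hc3 : s.card = 3
    · refine Submodule.subset_span ⟨by rwa [LinearMap.mem_ker], ?_⟩
      have : {t | c t ≠ 0}.toFinset = s := by
        rw [hs, Set.toFinset_setOf]
      rw [Set.ncard_eq_toFinset_card', this]
      exact hc3
    -- now s.card ≥ 4
    · obtain ⟨u, hus, huc⟩ := Finset.exists_subset_card_eq (show 3 ≤ s.card by omega)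
      obtain ⟨i, j, l, hij, hil, hjl, hu⟩ := Finset.card_eq_three.mp huc
      have his : i ∈ s := hus (by rw [hu]; simp)
      have hjs : j ∈ s := hus (by rw [hu]; simp)
      have hls : l ∈ s := hus (by rw [hu]; simp)
      have hWm : ∀ t, t ∈ s → α t ∈ X.dualAnnihilator := by
        intro t ht
        rw [Submodule.mem_dualAnnihilator]
        exact fun w hw => h2 t ((hmem t).mp ht) hw
      have hle : Submodule.span K {α i, α j} ≤ X.dualAnnihilator := by
        rw [Submodule.span_le]
        rintro z (rfl | rfl)
        exacts [hWm i his, hWm j hjs]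
      have heq : Submodule.span K {α i, α j} = X.dualAnnihilator :=
        Submodule.eq_of_le_of_finrank_le hle
          (by rw [hW, frk_span_pair (indepA hne hinj hij)])
      have hl3 : α l ∈ Submodule.span K ({α i, α j} : Set (Module.Dual K V)) := by
        rw [heq]; exact hWm l hls
      obtain ⟨a, b, hab'⟩ := Submodule.mem_span_pair.mp hl3
      have ha : a ≠ 0 := by
        rintro rfl
        rw [zero_smul, zero_add] at hab'
        exact smul_neA hne hinj hjl b hab'
      have hb : b ≠ 0 := by
        rintro rfl
        rw [zero_smul, add_zero] at hab'
        exact smul_neA hne hinj hil a hab'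
      set r : ι → K := Pi.single i a + Pi.single j b - Pi.single l 1 with hr
      have hri : r i = a := by
        have e1 : i ≠ j := hij
        have e2 : i ≠ l := hil
        simp [hr, Pi.single_apply, e1, e2]
      have hrj : r j = b := by
        have e1 : j ≠ i := hij.symm
        have e2 : j ≠ l := hjl
        simp [hr, Pi.single_apply, e1, e2]
      have hrl : r l = -1 := by
        have e1 : l ≠ i := hil.symm
        have e2 : l ≠ j := hjl.symm
        simp [hr, Pi.single_apply, e1, e2]
      have hrt : ∀ t, t ≠ i → t ≠ j → t ≠ l → r t = 0 := by
        intro t h1 h2 h3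
        simp [hr, Pi.single_apply, h1, h2, h3]
      have hrphi : phiA α r = 0 := by
        rw [hr]
        simp only [map_add, map_sub, phiA_single]
        rw [hab', one_smul, sub_self]
      have hrF2 : r ∈ F2A α := by
        refine Submodule.subset_span ⟨by rwa [LinearMap.mem_ker], ?_⟩
        have hset : {t | r t ≠ 0} = {i, j, l} := by
          ext t
          simp only [Set.mem_setOf_eq, Set.mem_insert_iff, Set.mem_singleton_iff]
          constructor
          · intro h
            by_contra hc
            push_neg at hc
            exact h (hrt t hc.1 hc.2.1 hc.2.2)
          · rintro (rfl | rfl | rfl)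
            · rw [hri]; exact ha
            · rw [hrj]; exact hb
            · rw [hrl]; exact neg_ne_zero.mpr one_ne_zero
        rw [hset]
        exact Set.ncard_eq_three.mpr ⟨i, j, l, hij, hil, hjl, rfl⟩
      have hcl : c l ≠ 0 := (hmem l).mp hls
      set c' : ι → K := c + c l • r with hc'
      have hc'li : ∀ t, c' t = c t + c l * r t := fun t => rfl
      have hc'l : c' l = 0 := by
        rw [hc'li, hrl]
        ring
      have hc'supp : ∀ t, c' t ≠ 0 → t ∈ s := by
        intro t ht
        by_contra hts
        have hct : c t = 0 := hsupp t hts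
        have hti : t ≠ i := fun e => hts (e ▸ his)
        have htj : t ≠ j := fun e => hts (e ▸ hjs)
        have htl : t ≠ l := fun e => hts (e ▸ hls)
        rw [hc'li, hrt t hti htj htl, hct] at ht
        simp at ht
      have hc'phi : phiA α c' = 0 := by
        rw [hc']
        simp only [map_add, map_smul, h1, hrphi, smul_zero, add_zero]
      have hc'X : ∀ t, c' t ≠ 0 → X ≤ LinearMap.ker (α t) := fun t ht =>
        h2 t ((hmem t).mp (hc'supp t ht))
      have hcard : (Finset.univ.filter fun t => c' t ≠ 0).card ≤ n := by
        have hsub : (Finset.univ.filter fun t => c' t ≠ 0) ⊆ s.erase l := by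
          intro t ht
          rw [Finset.mem_filter] at ht
          refine Finset.mem_erase.mpr ⟨fun e => ht.2 (e ▸ hc'l), hc'supp t ht.2⟩
        have := Finset.card_le_card hsub
        have := Finset.card_erase_of_mem hls
        omega
      have hc'F2 : c' ∈ F2A α := IH c' hc'phi hc'X hcard
      have : c = c' - c l • r := by rw [hc']; abel
      rw [this]
      exact Submodule.sub_mem _ hc'F2 (Submodule.smul_mem _ _ hrF2)

end Key
section Base

variable {K V ι : Type*} [Field K] [AddCommGroup V] [Module K V] [Fintype ι]

lemma kformal2_iff [FiniteDimensional K V] {α : ι → Module.Dual K V}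
    (hne : ∀ i, α i ≠ 0) (hinj : Function.Injective fun i => LinearMap.ker (α i)) :
    kFormalA α 2 ↔ HzeroA α 1 := by
  classical
  constructor
  · intro h
    replace h : LinearMap.ker (phiA α) = F2A α := h
    show LinearMap.ker (phiA α) ≤ Submodule.map (dA α 0) (DA α 0 ⊥)
    rw [h, F2A]
    refine Submodule.span_le.mpr ?_
    rintro c ⟨hcker, hc3⟩
    obtain ⟨i, j, l, hij, hil, hjl, hset⟩ := Set.ncard_eq_three.mp hc3
    have hmem : ∀ t, c t ≠ 0 ↔ (t = i ∨ t = j ∨ t = l) := by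
      intro t
      constructor
      · intro ht
        have : t ∈ {t | c t ≠ 0} := ht
        rw [hset] at this
        simpa using this
      · intro ht
        have h' : t ∈ ({i, j, l} : Set ι) := by
          rcases ht with rfl | rfl | rfl <;> simp
        rw [← hset] at h'
        exact h'
    have hci : c i ≠ 0 := (hmem i).mpr (Or.inl rfl)
    have hcj : c j ≠ 0 := (hmem j).mpr (Or.inr (Or.inl rfl))
    have hcl : c l ≠ 0 := (hmem l).mpr (Or.inr (Or.inr rfl))
    have hrel : c i • α i + c j • α j + c l • α l = 0 := by
      have hker : phiA α c = 0 := hcker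
      rw [phiA_eq_sum (T := ({i, j, l} : Finset ι)) ?hsupp] at hker
      case hsupp =>
        intro t ht
        by_contra hct
        rcases (hmem t).mp hct with rfl | rfl | rfl <;> simp at ht
      rw [show ({i, j, l} : Finset ι) = insert i (insert j {l}) from rfl] at hker
      rw [Finset.sum_insert (by simp [hij, hil]), Finset.sum_insert (by simp [hjl]),
        Finset.sum_singleton, ← add_assoc] at hker
      exact hker
    -- α l lies in the span of α i and α j
    have h2 : c l • α l = -(c i • α i + c j • α j) :=
      eq_neg_of_add_eq_zero_right hrel
    have h3 : α l = (c l)⁻¹ • -(c i • α i + c j • α j) := by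
      rw [← h2, smul_smul, inv_mul_cancel₀ hcl, one_smul]
    have hl : α l ∈ Submodule.span K ({α i, α j} : Set (Module.Dual K V)) := by
      rw [h3]
      refine Submodule.smul_mem _ _ (Submodule.neg_mem _ (Submodule.add_mem _ ?_ ?_)) <;>
        exact Submodule.smul_mem _ _ (Submodule.subset_span (by simp))
    set X := (Submodule.span K ({α i, α j} : Set (Module.Dual K V))).dualCoannihilator with hXd
    have hmemX : ∀ t : ι, α t ∈ Submodule.span K ({α i, α j} : Set (Module.Dual K V)) →
        X ≤ LinearMap.ker (α t) := by
      intro t ht v hv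
      rw [Submodule.mem_dualCoannihilator] at hv
      exact hv _ ht
    have hXi : X ≤ LinearMap.ker (α i) := hmemX i (Submodule.subset_span (by simp))
    have hXj : X ≤ LinearMap.ker (α j) := hmemX j (Submodule.subset_span (by simp))
    have hXl : X ≤ LinearMap.ker (α l) := hmemX l hl
    have hrkX : rkA K X = 2 := by
      rw [hXd, rkA_dualCoannihilator]
      exact frk_span_pair (indepA hne hinj hij)
    set S₀ : Finset ι := Finset.univ.filter fun t => X ≤ LinearMap.ker (α t) with hS₀
    have hmemS : ∀ t, t ∈ S₀ ↔ X ≤ LinearMap.ker (α t) := fun t => by simp [hS₀]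
    have hflat : flatA α S₀ = X := by
      apply le_antisymm
      · intro v hv
        have hv' : ∀ t, t ∈ S₀ → α t v = 0 := by
          intro t ht
          have := (Submodule.mem_iInf _).mp hv t
          exact (Submodule.mem_iInf _).mp this ht
        rw [Submodule.mem_dualCoannihilator]
        intro f hf
        induction hf using Submodule.span_induction with
        | mem f hf =>
          rcases hf with rfl | rfl
          · exact hv' i ((hmemS i).mpr hXi)
          · exact hv' j ((hmemS j).mpr hXj)
        | zero => rfl
        | add f g _ _ hf hg => rw [LinearMap.add_apply, hf, hg, add_zero]
        | smul a f _ hf => rw [LinearMap.smul_apply, hf, smul_zero]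
      · intro v hv
        refine (Submodule.mem_iInf _).mpr fun t => (Submodule.mem_iInf _).mpr fun ht => ?_
        exact (hmemS t).mp ht hv
    have hclosed : IsFlatA α S₀ := by
      intro t ht
      rw [hflat] at ht
      exact (hmemS t).mpr ht
    have hrk2 : rkA K (flatA α S₀) = 2 := by rw [hflat]; exact hrkX
    refine (Submodule.mem_map (f := dA α 0) (p := DA α 0 ⊥) (x := c)).mpr ⟨Pi.single (⟨S₀, hclosed, hrk2⟩ : IdxA α 2) c, ?_, ?_⟩
    · refine (mem_DA_bot α 0 _).mpr ?_
      intro Z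
      by_cases hZ : Z = (⟨S₀, hclosed, hrk2⟩ : IdxA α 2)
      · rw [hZ]
        have e := Pi.single_eq_same (M := fun _ : IdxA α (0+2) => AmbA α 0) (⟨S₀, hclosed, hrk2⟩ : IdxA α (0+2)) c
        refine Eq.mpr (congrArg (fun y => y ∈ RelA α 0 (flatA α S₀)) e) ?_
        refine (mem_RelA0 α _ _).mpr ?_
        refine ⟨hcker, fun t ht => ?_⟩
        by_contra hct
        apply ht
        refine le_trans (le_of_eq (show flatA α
          ((⟨S₀, hclosed, hrk2⟩ : IdxA α 2) : Finset ι) = X from hflat)) ?_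
        rcases (hmem t).mp hct with rfl | rfl | rfl
        exacts [hXi, hXj, hXl]
      · have e := Pi.single_eq_of_ne (M := fun _ : IdxA α (0+2) => AmbA α 0) hZ c
        exact Eq.mpr (congrArg (fun y => y ∈ RelA α 0 (flatA α Z.1)) e) (zero_mem _)
    · exact dA_single α 0 _ c
  · intro h
    replace h : LinearMap.ker (phiA α) ≤ Submodule.map (dA α 0) (DA α 0 ⊥) := h
    show LinearMap.ker (phiA α) = F2A α
    refine le_antisymm ?_ ?_
    · intro c hc
      obtain ⟨x, hx, rfl⟩ := (Submodule.mem_map (f := dA α 0) (p := DA α 0 ⊥) (x := c)).mp (h hc)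
      have hsum : (∑ Z : IdxA α 2, x Z) ∈ F2A α :=
        Submodule.sum_mem _ fun Z _ =>
          relA0_le_F2A hne hinj Z.2.2 ((mem_DA_bot α 0 x).mp hx Z)
      exact Eq.mpr (congrArg (fun y => y ∈ F2A α) (dA_apply α 0 x)) hsum
    · rw [F2A, Submodule.span_le]
      rintro c ⟨hc, -⟩
      exact hc

end Base
/-- An arrangement `A` is `k`-formal if and only if `H_i(D_•) = 0` for
every `i = 1, …, k-1`, where `D_•` is the complex with `D_0 = V*`, `D_1 = E(A)`,
`d_1 = φ` and `d_k = π_k` for `k ≥ 2`. -/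
theorem kformal_iff_homology_vanishes
    {K V ι : Type*} [Field K] [AddCommGroup V] [Module K V] [FiniteDimensional K V]
    [Fintype ι] (α : ι → Module.Dual K V)
    (hne : ∀ i, α i ≠ 0)
    (hinj : Function.Injective fun i => LinearMap.ker (α i))
    (k : ℕ) (hk : 2 ≤ k) :
    kFormalA α k ↔ ∀ i, 1 ≤ i → i ≤ k - 1 → HzeroA α i := by
  induction k, hk using Nat.le_induction with
  | base =>
    constructor
    · intro h i h1 h2
      have hi : i = 1 := by omega
      subst hi
      exact (kformal2_iff hne hinj).mp h
    · intro h
      exact (kformal2_iff hne hinj).mpr (h 1 le_rfl le_rfl)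
  | succ k hk2 IH =>
    obtain ⟨m, rfl⟩ : ∃ m, k = m + 2 := ⟨k - 2, by omega⟩
    have hstep : kFormalA α (m + 2 + 1) ↔ kFormalA α (m + 2) ∧ HzeroA α (m + 2) := by
      show (kFormalA α (m + 2) ∧
        RelA α (m + 1) ⊥ ≤ Submodule.map (dA α (m + 1)) (DA α (m + 1) ⊥)) ↔ _
      rw [relA_bot]
      exact Iff.rfl
    rw [hstep, IH]
    constructor
    · rintro ⟨h1, h2⟩ i hi1 hi2
      by_cases hi : i ≤ m + 1
      · exact h1 i hi1 hi
      · have he : i = m + 2 := by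
          have : i ≤ m + 2 := hi2
          omega
        subst he
        exact h2
    · intro h
      refine ⟨fun i h1 h2 => h i h1 (by omega), ?_⟩
      have := h (m + 2) (by omega) (by
        show m + 2 ≤ m + 2 + 1 - 1
        omega)
      exact this
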